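/- Let r ∈ ℝ^N, let Z ∈ ℝ^{N×k} satisfy ZᵀZ = I (orthonormal columns), let λ > 0, and set s = Zᵀr. Then the unique minimizer over β ∈ ℝ^k of f(β) = (1/2)‖r − Zβ‖₂² + λ‖β‖₂ is β̂ = (1 − λ/‖s‖₂)₊ · s, where x₊ = max(x, 0) and β̂ = 0 is understood when s = 0. -/

import Mathlib

/-- Euclidean norm of a vector in ℝ^n. -/
noncomputable def norm2 {n : ℕ} (v : Fin n → ℝ) : ℝ :=
  Real.sqrt (∑ i, v i ^ 2)

open Matrix

lemma norm2_nonneg {n : ℕ} (v : Fin n → ℝ) : 0 ≤ norm2 v := Real.sqrt_nonneg _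

lemma norm2_sq {n : ℕ} (v : Fin n → ℝ) : norm2 v ^ 2 = ∑ i, v i ^ 2 := by
  rw [norm2, Real.sq_sqrt]
  positivity

lemma norm2_smul {n : ℕ} (c : ℝ) (hc : 0 ≤ c) (v : Fin n → ℝ) :
    norm2 (c • v) = c * norm2 v := by
  rw [norm2, norm2]
  have h : ∑ i, (c • v) i ^ 2 = c ^ 2 * ∑ i, v i ^ 2 := by
    rw [Finset.mul_sum]
    exact Finset.sum_congr rfl fun i _ => by simp [mul_pow]
  rw [h, Real.sqrt_mul (by positivity), Real.sqrt_sq hc]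

lemma norm2_eq_zero {n : ℕ} (v : Fin n → ℝ) (h : norm2 v = 0) : v = 0 := by
  have h2 : ∑ i, v i ^ 2 = 0 := by rw [← norm2_sq, h]; ring
  funext i
  have h3 := (Finset.sum_eq_zero_iff_of_nonneg (fun i _ => sq_nonneg (v i))).mp h2 i
    (Finset.mem_univ i)
  exact pow_eq_zero_iff (by norm_num) |>.mp h3

lemma norm2_eq_norm {n : ℕ} (v : Fin n → ℝ) :
    norm2 v = ‖(WithLp.equiv 2 (Fin n → ℝ)).symm v‖ := by
  rw [EuclideanSpace.norm_eq, norm2]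
  congr 1
  exact Finset.sum_congr rfl fun i _ => by
    simp [WithLp.equiv_symm_apply, PiLp.toLp_apply, Real.norm_eq_abs, sq_abs]

lemma inner_eq_sum {n : ℕ} (v w : Fin n → ℝ) :
    (inner ℝ ((WithLp.equiv 2 (Fin n → ℝ)).symm v) ((WithLp.equiv 2 (Fin n → ℝ)).symm w) : ℝ)
      = ∑ i, v i * w i := by
  simp [PiLp.inner_apply, RCLike.inner_apply, mul_comm]

/-- If `ZᵀZ = I` (orthonormal columns), `λ > 0` and `s = Zᵀr`, then the unique
minimizer of `f(β) = (1/2)‖r − Zβ‖₂² + λ‖β‖₂` is `β̂ = (1 − λ/‖s‖₂)₊ · s`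
(when `s = 0` this formula gives `β̂ = 0`, using the convention `λ/0 = 0`). -/
theorem group_lasso_orthonormal_closed_form (N k : ℕ) (r : Fin N → ℝ)
    (Z : Matrix (Fin N) (Fin k) ℝ)
    (hZ : Z.transpose * Z = (1 : Matrix (Fin k) (Fin k) ℝ))
    (lam : ℝ) (hlam : 0 < lam)
    (s : Fin k → ℝ) (hs : s = Z.transpose.mulVec r) :
    ∀ β : Fin k → ℝ, β ≠ (max (1 - lam / norm2 s) 0) • s →
      (1 / 2) * norm2 (r - Z.mulVec ((max (1 - lam / norm2 s) 0) • s)) ^ 2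
          + lam * norm2 ((max (1 - lam / norm2 s) 0) • s)
        < (1 / 2) * norm2 (r - Z.mulVec β) ^ 2 + lam * norm2 β := by
  intro β hβ
  set ns := norm2 s with hns_def
  set c := max (1 - lam / ns) 0 with hc_def
  have hc0 : (0 : ℝ) ≤ c := le_max_right _ _
  have hns0 : 0 ≤ ns := norm2_nonneg s
  have hnb0 : 0 ≤ norm2 β := norm2_nonneg β
  -- key algebraic identities from orthonormality
  have hA : ∀ v : Fin k → ℝ, ∑ i, r i * Z.mulVec v i = ∑ j, s j * v j := by
    intro v
    have h1 : r ⬝ᵥ (Z *ᵥ v) = (Zᵀ *ᵥ r) ⬝ᵥ v := by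
      rw [Matrix.dotProduct_mulVec, Matrix.mulVec_transpose]
    simpa [dotProduct, hs] using h1
  have hB : ∀ v : Fin k → ℝ, ∑ i, Z.mulVec v i ^ 2 = ∑ j, v j ^ 2 := by
    intro v
    have h1 : (Z *ᵥ v) ⬝ᵥ (Z *ᵥ v) = ((Z *ᵥ v) ᵥ* Z) ⬝ᵥ v := Matrix.dotProduct_mulVec _ _ _
    have h2 : (Z *ᵥ v) ᵥ* Z = Zᵀ *ᵥ (Z *ᵥ v) := (Matrix.mulVec_transpose _ _).symm
    have h3 : Zᵀ *ᵥ (Z *ᵥ v) = v := by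
      rw [Matrix.mulVec_mulVec, hZ, Matrix.one_mulVec]
    rw [h2, h3] at h1
    simpa [dotProduct, pow_two] using h1
  have expand : ∀ v : Fin k → ℝ,
      norm2 (r - Z.mulVec v) ^ 2
        = norm2 r ^ 2 - 2 * (∑ j, s j * v j) + ∑ j, v j ^ 2 := by
    intro v
    have h1 : ∑ i, (r i - Z.mulVec v i) ^ 2
        = (∑ i, r i ^ 2) - 2 * (∑ i, r i * Z.mulVec v i) + ∑ i, Z.mulVec v i ^ 2 := by
      rw [Finset.mul_sum, ← Finset.sum_sub_distrib, ← Finset.sum_add_distrib]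
      exact Finset.sum_congr rfl fun i _ => by ring
    rw [norm2_sq, norm2_sq]
    simp only [Pi.sub_apply]
    rw [h1, hA v, hB v]
  -- Cauchy–Schwarz
  have hCS : (∑ j, s j * β j) ≤ ns * norm2 β := by
    rw [hns_def, norm2_eq_norm, norm2_eq_norm, ← inner_eq_sum]
    exact real_inner_le_norm _ _
  have hSbhat : ∑ j, s j * (c • s) j = c * ns ^ 2 := by
    rw [norm2_sq]
    rw [Finset.mul_sum]
    exact Finset.sum_congr rfl fun j _ => by simp [smul_eq_mul]; ring
  have hbhat_sq : ∑ j, ((c • s) j) ^ 2 = (c * ns) ^ 2 := by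
    rw [← norm2_sq, norm2_smul c hc0]
  rw [expand, expand, hSbhat, hbhat_sq, norm2_smul c hc0, ← hns_def]
  set nb := norm2 β with hnb_def
  set Sb := ∑ j, s j * β j with hSb_def
  have hnb_sq : ∑ j, β j ^ 2 = nb ^ 2 := (norm2_sq β).symm
  rw [hnb_sq]
  by_cases hns : ns = 0
  · -- s = 0
    have hs0 : s = 0 := norm2_eq_zero s hns
    have hb_ne : β ≠ 0 := by
      intro h; exact hβ (by rw [h, hs0, smul_zero])
    have hnb_pos : 0 < nb := by
      rcases lt_or_eq_of_le hnb0 with h | h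
      · exact h
      · exact absurd (norm2_eq_zero β h.symm) hb_ne
    have hSb0 : Sb = 0 := by
      rw [hSb_def, hs0]; simp
    rw [hSb0, hns]
    nlinarith [hnb_pos, hlam, mul_pos hnb_pos hnb_pos]
  · have hns_pos : 0 < ns := lt_of_le_of_ne hns0 (Ne.symm hns)
    by_cases hcase : ns ≤ lam
    · -- c = 0
      have hc_eq : c = 0 := by
        rw [hc_def]
        apply max_eq_right
        have : 1 ≤ lam / ns := (one_le_div hns_pos).mpr hcase
        linarith
      have hb_ne : β ≠ 0 := by
        intro h; exact hβ (by rw [h, hc_eq, zero_smul])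
      have hnb_pos : 0 < nb := by
        rcases lt_or_eq_of_le hnb0 with h | h
        · exact h
        · exact absurd (norm2_eq_zero β h.symm) hb_ne
      rw [hc_eq]
      nlinarith [hCS, hnb_pos, mul_pos hnb_pos hnb_pos,
        mul_le_mul_of_nonneg_right hcase (le_of_lt hnb_pos)]
    · push_neg at hcase
      have hc_eq : c = 1 - lam / ns := by
        rw [hc_def]
        apply max_eq_left
        have : lam / ns < 1 := (div_lt_one hns_pos).mpr hcase
        linarith
      have e1 : c * ns = ns - lam := by
        rw [hc_eq]; field_simp
      have e2 : c * ns ^ 2 = (ns - lam) * ns := by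
        rw [pow_two, ← mul_assoc, e1]
      have e3 : (c * ns) ^ 2 = (ns - lam) ^ 2 := by rw [e1]
      rw [e2, e3, e1]
      by_cases hSb : Sb = ns * nb
      · -- equality in Cauchy–Schwarz: β is a nonnegative multiple of s
        have hinner : (inner ℝ ((WithLp.equiv 2 (Fin k → ℝ)).symm s)
            ((WithLp.equiv 2 (Fin k → ℝ)).symm β) : ℝ)
            = ‖(WithLp.equiv 2 (Fin k → ℝ)).symm s‖ * ‖(WithLp.equiv 2 (Fin k → ℝ)).symm β‖ := by
          rw [inner_eq_sum, ← norm2_eq_norm, ← norm2_eq_norm, ← hns_def, ← hnb_def, ← hSb_def]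
          exact hSb
        have hsm := (inner_eq_norm_mul_iff_real).mp hinner
        rw [← norm2_eq_norm, ← norm2_eq_norm, ← hns_def, ← hnb_def] at hsm
        have hp : ∀ i, nb * s i = ns * β i := by
          intro i
          have h4 := congrArg (WithLp.equiv 2 (Fin k → ℝ)) hsm
          simp only [WithLp.equiv_apply, WithLp.ofLp_smul, WithLp.equiv_symm_apply, WithLp.ofLp_toLp] at h4
          have h5 := congrFun h4 i
          simpa [smul_eq_mul] using h5
        have hbeq : β = (nb / ns) • s := by
          funext i
          have := hp i
          simp only [Pi.smul_apply, smul_eq_mul]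
          field_simp
          linarith [hp i]
        have hnbne : nb ≠ ns - lam := by
          intro h
          apply hβ
          rw [hbeq]
          congr 1
          rw [h, hc_eq, sub_div, div_self hns]
        have key : 0 < (nb - (ns - lam)) ^ 2 := by
          have h' : nb - (ns - lam) ≠ 0 := sub_ne_zero.mpr hnbne
          exact lt_of_le_of_ne (sq_nonneg _) (Ne.symm (pow_ne_zero 2 h'))
        rw [hSb]
        nlinarith [key]
      · have hSblt : Sb < ns * nb := lt_of_le_of_ne hCS hSb
        nlinarith [hSblt, sq_nonneg (nb - (ns - lam))]
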